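/- Let ℓ be a prime and let s ∈ GL₂(𝔽_ℓ) be an element of order exactly ℓ. Then for every c ∈ GL₂(𝔽_ℓ) with c·s = s·c, the determinant det(c) is a square in 𝔽_ℓ^×. -/

import Mathlib

/-- Let `ℓ` be a prime and `s ∈ GL₂(𝔽_ℓ)` of order exactly `ℓ`. Then for
every `c ∈ GL₂(𝔽_ℓ)` commuting with `s`, the determinant of `c` is a square in `𝔽_ℓ^×`. -/
theorem statement11 (ℓ : ℕ) [Fact ℓ.Prime] (s : GL (Fin 2) (ZMod ℓ)) (hs : orderOf s = ℓ)
    (c : GL (Fin 2) (ZMod ℓ)) (hc : c * s = s * c) :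
    IsSquare (Matrix.GeneralLinearGroup.det c) := by
  have hp : ℓ.Prime := Fact.out
  set M : Matrix (Fin 2) (Fin 2) (ZMod ℓ) := s.val with hM
  set C : Matrix (Fin 2) (Fin 2) (ZMod ℓ) := c.val with hCdef
  set N : Matrix (Fin 2) (Fin 2) (ZMod ℓ) := M - 1 with hNdef
  -- s^ℓ = 1
  have hMl : M ^ ℓ = 1 := by
    have h1 := pow_orderOf_eq_one s
    rw [hs] at h1
    have := congrArg Units.val h1
    simpa [Units.val_pow_eq_pow_val] using this
  have hNl : N ^ ℓ = 0 := by
    rw [hNdef, sub_pow_char_of_commute ℓ (Commute.one_right M), hMl, one_pow, sub_self]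
  have hNne : N ≠ 0 := by
    intro h
    have hM1 : M = 1 := by rwa [hNdef, sub_eq_zero] at h
    have : s = 1 := Units.ext hM1
    rw [this, orderOf_one] at hs
    exact hp.one_lt.ne' hs.symm
  have hdet0 : N.det = 0 := by
    have : N.det ^ ℓ = 0 := by rw [← Matrix.det_pow, hNl, Matrix.det_zero]
    exact pow_eq_zero_iff hp.ne_zero |>.mp this
  set a := N 0 0 with ha
  set b := N 0 1 with hb
  set g := N 1 0 with hg
  set d := N 1 1 with hd'
  have hNN : N * N = (a + d) • N - N.det • (1 : Matrix (Fin 2) (Fin 2) (ZMod ℓ)) := by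
    ext i j
    fin_cases i <;> fin_cases j <;>
      simp [Matrix.mul_apply, Fin.sum_univ_two, Matrix.det_fin_two, Matrix.one_apply,
        ← ha, ← hb, ← hg, ← hd'] <;> ring
  rw [hdet0, zero_smul, sub_zero] at hNN
  have htau : a + d = 0 := by
    by_contra htau
    have hpow : ∀ k : ℕ, N ^ (k + 1) = (a + d) ^ k • N := by
      intro k
      induction k with
      | zero => simp
      | succ n ih => rw [pow_succ, ih, Matrix.smul_mul, hNN, smul_smul, ← pow_succ]
    have h := hpow (ℓ - 1)
    rw [Nat.sub_add_cancel hp.one_lt.le, hNl] at h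
    rcases smul_eq_zero.mp h.symm with h' | h'
    · exact htau (pow_eq_zero_iff (Nat.sub_ne_zero_of_lt hp.one_lt) |>.mp h')
    · exact hNne h'
  have hdeq : d = -a := by linear_combination htau
  have hbg : b * g = -(a * a) := by
    have := hdet0
    rw [Matrix.det_fin_two, ← ha, ← hb, ← hg, ← hd', hdeq] at this
    linear_combination -this
  -- commutation
  have hcomm : C * N = N * C := by
    have h1 : C * M = M * C := by
      have := congrArg Units.val hc
      simpa [Units.val_mul] using this
    rw [hNdef, Matrix.mul_sub, Matrix.sub_mul, h1, Matrix.mul_one, Matrix.one_mul]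
  set p := C 0 0 with hpd
  set q := C 0 1 with hq
  set r := C 1 0 with hr
  set t := C 1 1 with ht
  have e00 := congrFun (congrFun hcomm 0) 0
  have e01 := congrFun (congrFun hcomm 0) 1
  have e10 := congrFun (congrFun hcomm 1) 0
  have e11 := congrFun (congrFun hcomm 1) 1
  simp only [Matrix.mul_apply, Fin.sum_univ_two, ← ha, ← hb, ← hg, ← hd',
    ← hpd, ← hq, ← hr, ← ht, hdeq] at e00 e01 e10 e11
  have hdetC : (Matrix.GeneralLinearGroup.det c : ZMod ℓ) = p * t - q * r := by
    rw [Matrix.GeneralLinearGroup.val_det_apply, Matrix.det_fin_two]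
  have key : ∃ u : ZMod ℓ, (Matrix.GeneralLinearGroup.det c : ZMod ℓ) = u * u := by
    by_cases hbz : b ≠ 0
    · refine ⟨(p * b - a * q) * b⁻¹, ?_⟩
      have key : (p * t - q * r) * (b * b) = (p * b - a * q) * (p * b - a * q) := by
        linear_combination (-(p * b)) * e01 + (q * b) * e00 - (q * q) * hbg
      rw [hdetC]
      field_simp
      linear_combination key
    · push_neg at hbz
      by_cases hgz : g ≠ 0
      · refine ⟨(p * g - a * r) * g⁻¹, ?_⟩
        have key : (p * t - q * r) * (g * g) = (p * g - a * r) * (p * g - a * r) := by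
          linear_combination (p * g) * e10 + (r * g) * e11 - (r * r) * hbg
        rw [hdetC]
        field_simp
        linear_combination key
      · push_neg at hgz
        exfalso
        have haz : a = 0 := by
          have : a * a = 0 := by rw [hbz, hgz] at hbg; linear_combination hbg
          exact mul_self_eq_zero.mp this
        apply hNne
        ext i j
        fin_cases i <;> fin_cases j <;>
          simp [← ha, ← hb, ← hg, ← hd', haz, hbz, hgz, hdeq]
  obtain ⟨u, hu⟩ := key
  have hUnit : IsUnit u := by
    have : IsUnit (u * u) := by rw [← hu]; exact (Matrix.GeneralLinearGroup.det c).isUnit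
    exact isUnit_of_mul_isUnit_left this
  exact ⟨hUnit.unit, Units.ext (by rw [Units.val_mul, IsUnit.unit_spec, ← hu])⟩
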